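/- In any strong odd coloring of the wheel W_n = C_n ∨ K_1 with n > 8, each color is used on at most ⌊n/3⌋ vertices of the cycle C_n if ⌊n/3⌋ is odd, and on at most ⌊n/3⌋ − 1 vertices of C_n if ⌊n/3⌋ is even. -/

import Mathlib

open SimpleGraph

/-- A coloring `φ` of the vertices of `G` is a strong odd coloring if it is proper and,
for every vertex `v` and every color `c`, the number of neighbors of `v` colored `c`
is either zero or odd. -/
def IsStrongOddColoring {V α : Type*} (G : SimpleGraph V) (φ : V → α) : Prop :=
  (∀ u v : V, G.Adj u v → φ u ≠ φ v) ∧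
  ∀ (v : V) (c : α),
    {u : V | G.Adj v u ∧ φ u = c}.ncard = 0 ∨ Odd {u : V | G.Adj v u ∧ φ u = c}.ncard

/-- The strong odd chromatic number: the least `k` such that `G` admits a strong odd
coloring with `k` colors. -/
noncomputable def strongOddChromaticNumber {V : Type*} (G : SimpleGraph V) : ℕ :=
  sInf {k : ℕ | ∃ φ : V → Fin k, IsStrongOddColoring G φ}

/-- The join `G ∨ H` of two graphs: disjoint copies of `G` and `H` together with all
edges between them. -/
def joinGraph {V W : Type*} (G : SimpleGraph V) (H : SimpleGraph W) :
    SimpleGraph (V ⊕ W) where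
  Adj x y :=
    match x, y with
    | Sum.inl a, Sum.inl b => G.Adj a b
    | Sum.inl _, Sum.inr _ => True
    | Sum.inr _, Sum.inl _ => True
    | Sum.inr a, Sum.inr b => H.Adj a b
  symm := ⟨by rintro (a | a) (b | b) h <;> first | exact h.symm | trivial⟩
  loopless := ⟨by rintro (a | a) h <;> first | exact G.loopless.irrefl a h | exact H.loopless.irrefl a h⟩

/-- The wheel graph `W_n = C_n ∨ K_1`. -/
def wheelGraph (n : ℕ) : SimpleGraph (Fin n ⊕ Fin 1) :=
  joinGraph (cycleGraph n) (⊥ : SimpleGraph (Fin 1))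

/-- `G_n = C_n ∨ K̄_2`; the two vertices of `K̄_2` are `x_n = Sum.inr 0` and
`y_n = Sum.inr 1`. -/
def cycleJoinTwo (n : ℕ) : SimpleGraph (Fin n ⊕ Fin 2) :=
  joinGraph (cycleGraph n) (⊥ : SimpleGraph (Fin 2))

/-- The one point union of graphs `G` and `H`, obtained by identifying the vertex
`a` of `G` with the vertex `b` of `H` (the identified vertex is `Sum.inl a`). -/
def onePointUnion {V W : Type*} (G : SimpleGraph V) (H : SimpleGraph W) (a : V) (b : W) :
    SimpleGraph (V ⊕ {w : W // w ≠ b}) where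
  Adj x y :=
    match x, y with
    | Sum.inl u, Sum.inl v => G.Adj u v
    | Sum.inl u, Sum.inr v => u = a ∧ H.Adj b v.1
    | Sum.inr v, Sum.inl u => u = a ∧ H.Adj b v.1
    | Sum.inr u, Sum.inr v => H.Adj u.1 v.1
  symm := ⟨by
    rintro (u | u) (v | v) h
    · exact h.symm
    · exact h
    · exact h
    · exact h.symm⟩
  loopless := ⟨by
    rintro (u | u) h
    · exact G.loopless.irrefl u h
    · exact H.loopless.irrefl u.1 h⟩

/-- `I_y(G_m, G_n)`: the one point union of `G_m = C_m ∨ K̄_2` and `G_n = C_n ∨ K̄_2`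
obtained by identifying the vertices `y_m` and `y_n`. -/
def Iy (m n : ℕ) :
    SimpleGraph ((Fin m ⊕ Fin 2) ⊕ {w : Fin n ⊕ Fin 2 // w ≠ Sum.inr 1}) :=
  onePointUnion (cycleJoinTwo m) (cycleJoinTwo n) (Sum.inr 1) (Sum.inr 1)

/-- A planar embedding of a graph `G`: an injective placement of the vertices in the
plane together with, for each edge, an arc (injective path) joining the images of its
endpoints, such that arcs do not pass through images of other vertices and two arcs of
distinct edges meet only in common endpoints. -/
structure PlanarEmbedding {V : Type*} (G : SimpleGraph V) where
  vmap : V → ℝ × ℝ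
  vmap_inj : Function.Injective vmap
  arc : ∀ u v : V, G.Adj u v → Path (vmap u) (vmap v)
  arc_symm : ∀ (u v : V) (h : G.Adj u v), arc v u h.symm = (arc u v h).symm
  arc_inj : ∀ (u v : V) (h : G.Adj u v), Function.Injective (arc u v h)
  arc_vertex : ∀ (u v : V) (h : G.Adj u v) (w : V),
    vmap w ∈ Set.range (arc u v h) → w = u ∨ w = v
  arc_disjoint : ∀ (u v u' v' : V) (h : G.Adj u v) (h' : G.Adj u' v'),
    s(u, v) ≠ s(u', v') →
    Set.range (arc u v h) ∩ Set.range (arc u' v' h') ⊆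
      ({vmap u, vmap v} ∩ {vmap u', vmap v'} : Set (ℝ × ℝ))

/-- A graph is planar if it admits a planar embedding. -/
def IsPlanar {V : Type*} (G : SimpleGraph V) : Prop :=
  Nonempty (PlanarEmbedding G)

lemma aux_count (m : ℕ) (S : Finset (Fin (m+9)))
    (h : ∀ j ∈ S, j + 1 ∉ S ∧ j + 2 ∉ S) : 3 * S.card ≤ m + 9 := by
  have hcard : ({0,1,2} : Finset (Fin (m+9))).card = 3 := by
    rw [Finset.card_insert_of_notMem, Finset.card_insert_of_notMem, Finset.card_singleton] <;>
      simp [Fin.ext_iff, Fin.val_two, Nat.mod_eq_of_lt (show 2 < m + 9 by omega)]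
  have key : ∀ j ∈ S, ∀ j' ∈ S, j ≠ j' + 1 ∧ j ≠ j' + 2 := by
    intro j hj j' hj'
    constructor <;> rintro rfl
    · exact (h j' hj').1 hj
    · exact (h j' hj').2 hj
  have hinj : Set.InjOn (fun p : Fin (m+9) × Fin (m+9) => p.1 + p.2)
      ↑(S ×ˢ ({0,1,2} : Finset (Fin (m+9)))) := by
    rintro ⟨j, k⟩ hp ⟨j', k'⟩ hq e
    simp only [Finset.coe_product, Set.mem_prod, Finset.mem_coe, Finset.mem_insert,
      Finset.mem_singleton] at hp hq
    obtain ⟨hj, hk⟩ := hp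
    obtain ⟨hj', hk'⟩ := hq
    simp only at e
    have h21 : (2 : Fin (m+9)) = 1 + 1 := Fin.ext (by simp [Fin.val_add])
    rcases hk with rfl | rfl | rfl <;> rcases hk' with rfl | rfl | rfl
    · rw [add_zero, add_zero] at e; rw [Prod.mk.injEq]; exact ⟨e, rfl⟩
    · rw [add_zero] at e; exact absurd e (key j hj j' hj').1
    · rw [add_zero] at e; exact absurd e (key j hj j' hj').2
    · rw [add_zero] at e; exact absurd e.symm (key j' hj' j hj).1
    · have : j = j' := add_right_cancel e; subst this; rfl
    · rw [h21, ← add_assoc] at e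
      exact absurd (add_right_cancel e) (key j hj j' hj').1
    · rw [add_zero] at e; exact absurd e.symm (key j' hj' j hj).2
    · rw [h21, ← add_assoc] at e
      exact absurd (add_right_cancel e).symm (key j' hj' j hj).1
    · have : j = j' := add_right_cancel e; subst this; rfl
  calc 3 * S.card = (S ×ˢ ({0,1,2} : Finset (Fin (m+9)))).card := by
        rw [Finset.card_product, hcard, mul_comm]
    _ ≤ (Finset.univ : Finset (Fin (m+9))).card :=
        Finset.card_le_card_of_injOn _ (fun _ _ => Finset.mem_univ _) hinj
    _ = m + 9 := by simp

/-- In any strong odd coloring of the wheel `W_n = C_n ∨ K_1` with `n > 8`, each color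
is used on at most `⌊n/3⌋` vertices of the cycle `C_n` if `⌊n/3⌋` is odd, and on at
most `⌊n/3⌋ - 1` vertices of `C_n` if `⌊n/3⌋` is even. -/
theorem stmt_7 (n : ℕ) (hn : 8 < n) {α : Type*} (φ : Fin n ⊕ Fin 1 → α)
    (hφ : IsStrongOddColoring (wheelGraph n) φ) (c : α) :
    (Odd (n / 3) → {u : Fin n | φ (Sum.inl u) = c}.ncard ≤ n / 3) ∧
    (Even (n / 3) → {u : Fin n | φ (Sum.inl u) = c}.ncard ≤ n / 3 - 1) := by
  classical
  obtain ⟨m, rfl⟩ : ∃ m, n = m + 9 := ⟨n - 9, by omega⟩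
  set S : Set (Fin (m+9)) := {u | φ (Sum.inl u) = c} with hS
  -- parity of |S| from the hub
  have hubAdj : ∀ a : Fin (m+9), (wheelGraph (m+9)).Adj (Sum.inr 0) (Sum.inl a) := by
    intro a; trivial
  have hubA : {u : Fin (m+9) ⊕ Fin 1 | (wheelGraph (m+9)).Adj (Sum.inr 0) u ∧ φ u = c}
      = Sum.inl '' S := by
    ext u
    rcases u with a | b
    · simp only [Set.mem_setOf_eq, Set.mem_image]
      constructor
      · rintro ⟨-, h⟩; exact ⟨a, h, rfl⟩
      · rintro ⟨a', h, he⟩; cases he; exact ⟨hubAdj a, h⟩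
    · have : ¬ (wheelGraph (m+9)).Adj (Sum.inr 0) (Sum.inr b) := fun h => h
      simp [this]
  have hparity : S.ncard = 0 ∨ Odd S.ncard := by
    have := hφ.2 (Sum.inr 0) c
    rwa [hubA, Set.ncard_image_of_injective _ Sum.inl_injective] at this
  -- main bound: S.ncard ≤ (m+9)/3, unless hub colored c (then S empty)
  have hmain : S.ncard ≤ (m+9) / 3 := by
    by_cases hhub : φ (Sum.inr 0) = c
    · have : S = ∅ := by
        ext a
        simp only [hS, Set.mem_setOf_eq, Set.mem_empty_iff_false, iff_false]
        intro h
        exact hφ.1 (Sum.inr 0) (Sum.inl a) (hubAdj a) (hhub.trans h.symm)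
      simp [this]
    · -- S has no two elements at distance 1 or 2
      have hfree : ∀ j : Fin (m+9), j ∈ S.toFinset → j + 1 ∉ S.toFinset ∧ j + 2 ∉ S.toFinset := by
        intro j hj
        rw [Set.mem_toFinset] at hj
        have hnb : ∀ w : Fin (m+9), (cycleGraph (m+9)).Adj (j+1) w ↔ w = j ∨ w = j+2 := by
          intro w
          rw [show (cycleGraph (m+9)).Adj (j+1) w ↔ (j+1) - w = 1 ∨ w - (j+1) = 1 from
            cycleGraph_adj]
          letI := Fin.instCommRing (m+9)
          constructor
          · rintro (h | h)
            · left; linear_combination -h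
            · right; linear_combination h
          · rintro (rfl | rfl)
            · left; ring
            · right; ring
        constructor
        · rw [Set.mem_toFinset]
          intro hj1
          have hadj : (wheelGraph (m+9)).Adj (Sum.inl (j+1)) (Sum.inl j) := by
            show (cycleGraph (m+9)).Adj (j+1) j
            exact (hnb j).mpr (Or.inl rfl)
          exact hφ.1 _ _ hadj (hj1.trans hj.symm)
        · rw [Set.mem_toFinset]
          intro hj2
          have hN : {u : Fin (m+9) ⊕ Fin 1 |
              (wheelGraph (m+9)).Adj (Sum.inl (j+1)) u ∧ φ u = c}
              = {Sum.inl j, Sum.inl (j+2)} := by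
            ext u
            rcases u with a | b
            · simp only [Set.mem_setOf_eq, Set.mem_insert_iff, Set.mem_singleton_iff,
                Sum.inl.injEq]
              constructor
              · rintro ⟨hadj, -⟩
                exact (hnb a).mp hadj
              · rintro (h | h)
                · exact ⟨(hnb a).mpr (Or.inl h), h ▸ hj⟩
                · exact ⟨(hnb a).mpr (Or.inr h), h ▸ hj2⟩
            · have hb : b = 0 := Subsingleton.elim _ _
              subst hb
              simp only [Set.mem_setOf_eq, Set.mem_insert_iff, Set.mem_singleton_iff]
              constructor
              · rintro ⟨-, h⟩; exact absurd h hhub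
              · rintro (h | h) <;> exact absurd h (by simp)
          have hne : (Sum.inl j : Fin (m+9) ⊕ Fin 1) ≠ Sum.inl (j+2) := by
            intro h
            have : j = j + 2 := Sum.inl_injective h
            have h2 : (2 : Fin (m+9)) = 0 := (left_eq_add.mp this)
            have : ((2 : Fin (m+9)) : ℕ) = 2 := by simp [Fin.val_two]
            rw [h2] at this
            simp at this
          have := hφ.2 (Sum.inl (j+1)) c
          rw [hN, Set.ncard_pair hne] at this
          rcases this with h | h
          · exact absurd h (by norm_num)
          · exact absurd h (by norm_num)
      have hb := aux_count m S.toFinset hfree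
      rw [Set.ncard_eq_toFinset_card']
      omega
  constructor
  · intro _; exact hmain
  · intro heven
    rcases hparity with h0 | hodd
    · simp [h0]
    · have hne : S.ncard ≠ (m+9)/3 := by
        intro h
        rw [h] at hodd
        exact (Nat.not_even_iff_odd.mpr hodd) heven
      omega
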